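/- Let G be a right-angled Artin group with generators s_1,…,s_n, and suppose φ: G → Isom(X) is an action on a metric space X with basepoint μ such that there exist constants K ≥ 1, A ≥ 1, B ≥ 0 with: for every σ ∈ G and every minimal word x_1^{e_1}⋯x_k^{e_k} ∈ Min(σ), there exist k distinct 'witnesses' W_1,…,W_k with associated quantities d_{W_i}(μ, φ(σ)μ) ≥ K|e_i|, and the sum ∑_i d_{W_i}(μ, φ(σ)μ) ≤ A·d(μ, φ(σ)μ) + B. Then the orbit map G → X, σ ↦ φ(σ)μ, is a quasi-isometric embedding with respect to the word metric on G. -/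

import Mathlib

/-- The commutator relators of a right-angled Artin group on the graph `Γ`. -/
def raagRel {V : Type*} (Γ : SimpleGraph V) : Set (FreeGroup V) :=
  {r | ∃ u v : V, Γ.Adj u v ∧
    r = FreeGroup.of u * FreeGroup.of v * (FreeGroup.of u)⁻¹ * (FreeGroup.of v)⁻¹}

/-- The right-angled Artin group on the graph `Γ`. -/
abbrev RAAG {V : Type*} (Γ : SimpleGraph V) := PresentedGroup (raagRel Γ)

/-- The generator of `RAAG Γ` corresponding to the vertex `v`. -/
def raagGen {V : Type*} (Γ : SimpleGraph V) (v : V) : RAAG Γ :=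
  PresentedGroup.of (rels := raagRel Γ) v

/-- The element of `RAAG Γ` represented by a word in syllable form
`x₁^{e₁} ⋯ x_k^{e_k}`, encoded as a list of (generator, exponent) pairs. -/
def wordProd {V : Type*} (Γ : SimpleGraph V) (w : List (V × ℤ)) : RAAG Γ :=
  (w.map fun p => (raagGen Γ p.1) ^ p.2).prod

/-- `w` is a word for `σ` with the minimal number of syllables (`w ∈ Min(σ)`). -/
def IsMinWord {V : Type*} (Γ : SimpleGraph V) (σ : RAAG Γ) (w : List (V × ℤ)) : Prop :=
  wordProd Γ w = σ ∧ ∀ w' : List (V × ℤ), wordProd Γ w' = σ → w.length ≤ w'.length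

/-- The number of syllables of `σ`: the least number of syllables of a word representing it. -/
noncomputable def sylCount {V : Type*} (Γ : SimpleGraph V) (σ : RAAG Γ) : ℕ :=
  sInf {k | ∃ w : List (V × ℤ), wordProd Γ w = σ ∧ w.length = k}

/-- Number of earlier occurrences of the syllable at position `i` in `w`. -/
def occCount {V : Type*} [DecidableEq V] [Inhabited V] (w : List (V × ℤ)) (i : ℕ) : ℕ :=
  (w.take i).count (w.getD i default)

/-- Position `i'` of `w'` carries the same syllable (same generator, exponent and
occurrence number) as position `i` of `w`. -/
def sylMatch {V : Type*} [DecidableEq V] [Inhabited V]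
    (w w' : List (V × ℤ)) (i i' : ℕ) : Prop :=
  i < w.length ∧ i' < w'.length ∧ w'.getD i' default = w.getD i default ∧
    occCount w' i' = occCount w i

/-- The syllable partial order on `syl(σ)`: the syllable at position `i` of the minimal
word `w` precedes the one at position `j` in *every* minimal word for `σ`. -/
def sylPrec {V : Type*} [DecidableEq V] [Inhabited V] (Γ : SimpleGraph V) (σ : RAAG Γ)
    (w : List (V × ℤ)) (i j : ℕ) : Prop :=
  ∀ w' : List (V × ℤ), IsMinWord Γ σ w' →
    ∀ i' j' : ℕ, sylMatch w w' i i' → sylMatch w w' j j' → i' < j'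

/-- The subsurface assigned to the `m`-th syllable of the word `w`:
`X^w(x_m^{e_m}) = φ(x₁^{e₁}⋯x_{m-1}^{e_{m-1}})(X_{J(m)})`. -/
def sylSubsurface {V S : Type*} [Inhabited V] (Γ : SimpleGraph V)
    (φ : RAAG Γ →* Equiv.Perm S) (X : V → Set S) (w : List (V × ℤ)) (m : ℕ) : Set S :=
  (φ (wordProd Γ (w.take m))) '' X (w.getD m default).1

/-- Word length in `RAAG Γ` with respect to the standard generators. -/
noncomputable def raagWordLen {V : Type*} (Γ : SimpleGraph V) (σ : RAAG Γ) : ℕ :=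
  sInf {k | ∃ l : List (RAAG Γ),
    (∀ y ∈ l, ∃ v : V, y = raagGen Γ v ∨ y = (raagGen Γ v)⁻¹) ∧
    l.prod = σ ∧ l.length = k}

section Aux
variable {V : Type*} (Γ : SimpleGraph V)

lemma exists_gen_list (σ : RAAG Γ) :
    ∃ l : List (RAAG Γ),
      (∀ y ∈ l, ∃ v : V, y = raagGen Γ v ∨ y = (raagGen Γ v)⁻¹) ∧ l.prod = σ := by
  have htop : Subgroup.closure (Set.range (raagGen Γ)) = ⊤ :=
    PresentedGroup.closure_range_of (raagRel Γ)
  have hσ : σ ∈ Submonoid.closure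
      (Set.range (raagGen Γ) ∪ (Set.range (raagGen Γ))⁻¹) := by
    rw [← Subgroup.closure_toSubmonoid, htop]
    exact Subgroup.mem_top σ
  obtain ⟨l, hl, hprod⟩ := Submonoid.exists_list_of_mem_closure hσ
  refine ⟨l, fun y hy => ?_, hprod⟩
  rcases hl y hy with h | h
  · obtain ⟨v, rfl⟩ := h; exact ⟨v, Or.inl rfl⟩
  · obtain ⟨v, hv⟩ := h; exact ⟨v, Or.inr (by rw [hv, inv_inv])⟩

lemma exists_word (σ : RAAG Γ) : ∃ w : List (V × ℤ), wordProd Γ w = σ := by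
  obtain ⟨l, hl, rfl⟩ := exists_gen_list Γ σ
  induction l with
  | nil => exact ⟨[], rfl⟩
  | cons a l ih =>
    obtain ⟨w, hw⟩ := ih fun y hy => hl y (List.mem_cons_of_mem _ hy)
    obtain ⟨v, hv | hv⟩ := hl a (List.mem_cons_self)
    · exact ⟨(v, 1) :: w, by simp [wordProd, hv] at hw ⊢; simp [hw]⟩
    · exact ⟨(v, -1) :: w, by simp [wordProd, hv] at hw ⊢; simp [hw]⟩

lemma exists_min_word (σ : RAAG Γ) : ∃ w, IsMinWord Γ σ w := by
  obtain ⟨w0, hw0⟩ := exists_word Γ σ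
  have hne : {k | ∃ w : List (V × ℤ), wordProd Γ w = σ ∧ w.length = k}.Nonempty :=
    ⟨w0.length, w0, hw0, rfl⟩
  obtain ⟨w, hw, hlen⟩ := Nat.sInf_mem hne
  exact ⟨w, hw, fun w' hw' => hlen ▸ Nat.sInf_le ⟨w', hw', rfl⟩⟩

lemma raagWordLen_le_sum_natAbs (w : List (V × ℤ)) :
    raagWordLen Γ (wordProd Γ w) ≤ (w.map fun p => p.2.natAbs).sum := by
  have key : ∀ w : List (V × ℤ), ∃ l : List (RAAG Γ),
      (∀ y ∈ l, ∃ v : V, y = raagGen Γ v ∨ y = (raagGen Γ v)⁻¹) ∧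
      l.prod = wordProd Γ w ∧ l.length = (w.map fun p => p.2.natAbs).sum := by
    intro w
    induction w with
    | nil => exact ⟨[], by simp, rfl, rfl⟩
    | cons p w ih =>
      obtain ⟨l, hl, hprod, hlen⟩ := ih
      set g : RAAG Γ := if 0 ≤ p.2 then raagGen Γ p.1 else (raagGen Γ p.1)⁻¹ with hg
      refine ⟨List.replicate p.2.natAbs g ++ l, ?_, ?_, by simp [hlen]⟩
      · intro y hy
        rcases List.mem_append.1 hy with h | h
        · have := List.eq_of_mem_replicate h
          subst this
          by_cases hp : 0 ≤ p.2
          · exact ⟨p.1, Or.inl (by simp [hg, hp])⟩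
          · exact ⟨p.1, Or.inr (by simp [hg, hp])⟩
        · exact hl y h
      · rw [List.prod_append, hprod, List.prod_replicate]
        have : g ^ p.2.natAbs = raagGen Γ p.1 ^ p.2 := by
          by_cases hp : 0 ≤ p.2
          · rw [hg, if_pos hp, ← zpow_natCast, Int.natAbs_of_nonneg hp]
          · rw [hg, if_neg hp, inv_pow, ← zpow_natCast,
              Int.ofNat_natAbs_of_nonpos (le_of_not_ge hp), zpow_neg, inv_inv]
        rw [this]; simp [wordProd]
  obtain ⟨l, hl, hprod, hlen⟩ := key w
  exact hlen ▸ Nat.sInf_le ⟨l, hl, hprod, rfl⟩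

lemma sum_fin_get {α M : Type*} [AddCommMonoid M] (f : α → M) :
    ∀ l : List α, ∑ i : Fin l.length, f (l.get i) = (l.map f).sum := by
  intro l
  induction l with
  | nil => simp
  | cons a l ih => simp [Fin.sum_univ_succ, ih]

end Aux

section Main2
variable {V : Type*} (Γ : SimpleGraph V)

lemma orbit_dist_le {X : Type*} [MetricSpace X] (φ : RAAG Γ →* (X ≃ᵢ X)) (μ : X)
    (C : ℝ) (hC : ∀ v : V, dist μ (φ (raagGen Γ v) μ) ≤ C)
    (l : List (RAAG Γ))
    (hl : ∀ y ∈ l, ∃ v : V, y = raagGen Γ v ∨ y = (raagGen Γ v)⁻¹) :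
    dist μ (φ l.prod μ) ≤ C * l.length := by
  induction l with
  | nil => simp [map_one]
  | cons a l ih =>
    have h1 : dist μ (φ a μ) ≤ C := by
      obtain ⟨v, hv | hv⟩ := hl a (List.mem_cons_self)
      · exact hv ▸ hC v
      · subst hv
        have hsymm : φ ((raagGen Γ v)⁻¹) = (φ (raagGen Γ v)).symm := by
          rw [map_inv]; rfl
        rw [hsymm]
        calc dist μ ((φ (raagGen Γ v)).symm μ)
            = dist (φ (raagGen Γ v) μ) (φ (raagGen Γ v) ((φ (raagGen Γ v)).symm μ)) :=
              ((φ (raagGen Γ v)).dist_eq _ _).symm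
          _ = dist (φ (raagGen Γ v) μ) μ := by rw [IsometryEquiv.apply_symm_apply]
          _ = dist μ (φ (raagGen Γ v) μ) := dist_comm _ _
          _ ≤ C := hC v
    have h2 := ih fun y hy => hl y (List.mem_cons_of_mem _ hy)
    have hmul : φ (a * l.prod) μ = φ a (φ l.prod μ) := by rw [map_mul]; rfl
    calc dist μ (φ ((a :: l).prod) μ)
        = dist μ (φ a (φ l.prod μ)) := by rw [List.prod_cons, hmul]
      _ ≤ dist μ (φ a μ) + dist (φ a μ) (φ a (φ l.prod μ)) := dist_triangle _ _ _
      _ = dist μ (φ a μ) + dist μ (φ l.prod μ) := by rw [(φ a).dist_eq]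
      _ ≤ C + C * l.length := add_le_add h1 h2
      _ = C * (a :: l).length := by push_cast [List.length_cons]; ring
end Main2

/-- If a right-angled Artin group acts by isometries on `X` and for every `σ` and every
minimal word for `σ` there are distinct witnesses `W₁,…,W_k` with
`d_{W_i}(μ, φ(σ)μ) ≥ K·|e_i|` and `∑ d_{W_i}(μ, φ(σ)μ) ≤ A·d(μ, φ(σ)μ) + B`, then the
orbit map `σ ↦ φ(σ)μ` is a quasi-isometric embedding for the word metric on the group. -/
theorem raag_orbit_map_qi_embedding {V : Type*} [Fintype V]
    (Γ : SimpleGraph V) {X : Type*} [MetricSpace X]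
    (φ : RAAG Γ →* (X ≃ᵢ X)) (μ : X)
    (W : Type*) (dW : RAAG Γ → W → ℝ)
    (K A B : ℝ) (hK : 1 ≤ K) (hA : 1 ≤ A) (hB : 0 ≤ B)
    (hwit : ∀ σ : RAAG Γ, ∀ w : List (V × ℤ), IsMinWord Γ σ w →
      ∃ f : Fin w.length → W, Function.Injective f ∧
        (∀ i : Fin w.length, K * |((w.get i).2 : ℝ)| ≤ dW σ (f i)) ∧
        (∑ i : Fin w.length, dW σ (f i)) ≤ A * dist μ (φ σ μ) + B) :
    ∃ A' B' : ℝ, 1 ≤ A' ∧ 0 ≤ B' ∧ ∀ σ τ : RAAG Γ,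
      ((raagWordLen Γ (σ⁻¹ * τ) : ℝ) - B') / A' ≤ dist (φ σ μ) (φ τ μ) ∧
      dist (φ σ μ) (φ τ μ) ≤ A' * (raagWordLen Γ (σ⁻¹ * τ) : ℝ) + B' := by
  classical
  set C : ℝ := 1 + ∑ v : V, dist μ (φ (raagGen Γ v) μ) with hCdef
  have hC1 : 1 ≤ C :=
    le_add_of_nonneg_right (Finset.sum_nonneg fun v _ => dist_nonneg)
  have hCgen : ∀ v : V, dist μ (φ (raagGen Γ v) μ) ≤ C := fun v =>
    calc dist μ (φ (raagGen Γ v) μ)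
        ≤ ∑ u : V, dist μ (φ (raagGen Γ u) μ) :=
          Finset.single_le_sum (f := fun u => dist μ (φ (raagGen Γ u) μ))
            (fun u _ => dist_nonneg) (Finset.mem_univ v)
      _ ≤ C := le_add_of_nonneg_left zero_le_one
  have hApos : (0:ℝ) < A + C := by linarith
  refine ⟨A + C, B, by linarith, hB, fun σ τ => ?_⟩
  set g : RAAG Γ := σ⁻¹ * τ with hgdef
  have hdist : dist (φ σ μ) (φ τ μ) = dist μ (φ g μ) := by
    have hτ : φ τ μ = φ σ (φ g μ) := by
      rw [show τ = σ * g by rw [hgdef, mul_inv_cancel_left], map_mul]; rfl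
    rw [hτ, (φ σ).dist_eq]
  have hd0 : 0 ≤ dist μ (φ g μ) := dist_nonneg
  constructor
  · -- lower bound
    obtain ⟨w, hwmin⟩ := exists_min_word Γ g
    obtain ⟨f, hfinj, hflow, hfsum⟩ := hwit g w hwmin
    set S : ℝ := ∑ i : Fin w.length, |((w.get i).2 : ℝ)| with hSdef
    have hS0 : 0 ≤ S := Finset.sum_nonneg fun i _ => abs_nonneg _
    have h1 : (raagWordLen Γ g : ℝ) ≤ S := by
      have hle := raagWordLen_le_sum_natAbs Γ w
      rw [hwmin.1] at hle
      calc (raagWordLen Γ g : ℝ)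
          ≤ ((((w.map fun p => p.2.natAbs).sum : ℕ)) : ℝ) := Nat.cast_le.mpr hle
        _ = (w.map fun p => ((p.2.natAbs : ℝ))).sum := by
            rw [Nat.cast_list_sum, List.map_map]; rfl
        _ = ∑ i : Fin w.length, (((w.get i).2.natAbs : ℝ)) :=
            (sum_fin_get (fun p : V × ℤ => ((p.2.natAbs : ℝ))) w).symm
        _ = S := Finset.sum_congr rfl fun i _ => by
            rw [Nat.cast_natAbs, Int.cast_abs]
    have h3 : K * S ≤ ∑ i : Fin w.length, dW g (f i) := by
      rw [hSdef, Finset.mul_sum]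
      exact Finset.sum_le_sum fun i _ => hflow i
    have h2 : S ≤ K * S := le_mul_of_one_le_left hS0 hK
    have hchain : (raagWordLen Γ g : ℝ) ≤ A * dist μ (φ g μ) + B := by
      linarith [hfsum]
    rw [hdist, div_le_iff₀ hApos]
    nlinarith [hd0]
  · -- upper bound
    obtain ⟨l0, hl0, hp0⟩ := exists_gen_list Γ g
    obtain ⟨l, hl, hprod, hlen⟩ :=
      Nat.sInf_mem (s := {k | ∃ l : List (RAAG Γ),
        (∀ y ∈ l, ∃ v : V, y = raagGen Γ v ∨ y = (raagGen Γ v)⁻¹) ∧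
        l.prod = g ∧ l.length = k}) ⟨l0.length, l0, hl0, hp0, rfl⟩
    have hub : dist μ (φ g μ) ≤ C * l.length := by
      rw [← hprod]; exact orbit_dist_le Γ φ μ C hCgen l hl
    have hlenN : l.length = raagWordLen Γ g := hlen
    have hlen' : (l.length : ℝ) = (raagWordLen Γ g : ℝ) := by exact_mod_cast hlenN
    rw [hdist]
    have hn0 : (0:ℝ) ≤ (raagWordLen Γ g : ℝ) := Nat.cast_nonneg _
    nlinarith [hub, hlen']
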